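/- Let K be a field, let b_n, u_n (n ≥ 0) be sequences in K, and let P_n ∈ K[x] be the monic polynomials defined by P_0 = 1, P_1 = x − b_0, and P_{n+1} = (x − b_n)P_n − u_n P_{n−1} for n ≥ 1. Let c ∈ K and let Φ_n (n ≥ 0) be a sequence of nonzero elements of K satisfying Φ_{n+1} + b_n Φ_n + u_n Φ_{n−1} = c Φ_n for all n ≥ 1. Set B_n = Φ_n/Φ_{n−1}, and define the Geronimus-transformed polynomials P̃_0 = 1 and P̃_n = P_n − B_n P_{n−1} for n ≥ 1. Then the P̃_n satisfy the three-term recurrence x P̃_n = P̃_{n+1} + b̃_n P̃_n + ũ_n P̃_{n−1} for all n ≥ 1, where b̃_n = b_n + B_{n+1} − B_n for n ≥ 1, ũ_1 = B_1(c − b_0 − B_1), and ũ_n = u_{n−1} B_n / B_{n−1} for n ≥ 2; moreover x P̃_0 = P̃_1 + (b_0 + B_1) P̃_0. -/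

import Mathlib

open Polynomial

/-- Effect of a Geronimus transformation on the three-term recurrence of monic
orthogonal polynomials: if `P_0 = 1`, `P_1 = x − b_0`,
`P_{n+1} = (x − b_n)P_n − u_n P_{n−1}` (n ≥ 1), `Φ_n ≠ 0` satisfies
`Φ_{n+1} + b_n Φ_n + u_n Φ_{n−1} = c Φ_n` (n ≥ 1), `B_n = Φ_n/Φ_{n−1}`,
`P̃_0 = 1`, `P̃_n = P_n − B_n P_{n−1}` (n ≥ 1), then
`x P̃_n = P̃_{n+1} + b̃_n P̃_n + ũ_n P̃_{n−1}` for `n ≥ 1` with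
`b̃_n = b_n + B_{n+1} − B_n`, `ũ_1 = B_1(c − b_0 − B_1)`,
`ũ_n = u_{n−1} B_n / B_{n−1}` (n ≥ 2); moreover `x P̃_0 = P̃_1 + (b_0 + B_1) P̃_0`. -/
theorem geronimus_three_term_recurrence {K : Type*} [Field K]
    (b u : ℕ → K) (P : ℕ → Polynomial K)
    (hP0 : P 0 = 1) (hP1 : P 1 = X - C (b 0))
    (hPrec : ∀ n : ℕ, 1 ≤ n → P (n + 1) = (X - C (b n)) * P n - C (u n) * P (n - 1))
    (c : K) (Φ : ℕ → K) (hΦne : ∀ n, Φ n ≠ 0)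
    (hΦ : ∀ n : ℕ, 1 ≤ n → Φ (n + 1) + b n * Φ n + u n * Φ (n - 1) = c * Φ n)
    (B : ℕ → K) (hB : ∀ n : ℕ, 1 ≤ n → B n = Φ n / Φ (n - 1))
    (tP : ℕ → Polynomial K) (htP0 : tP 0 = 1)
    (htP : ∀ n : ℕ, 1 ≤ n → tP n = P n - C (B n) * P (n - 1))
    (bt ut : ℕ → K)
    (hbt : ∀ n : ℕ, 1 ≤ n → bt n = b n + B (n + 1) - B n)
    (hut1 : ut 1 = B 1 * (c - b 0 - B 1))
    (hut : ∀ n : ℕ, 2 ≤ n → ut n = u (n - 1) * B n / B (n - 1)) :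
    (∀ n : ℕ, 1 ≤ n →
        X * tP n = tP (n + 1) + C (bt n) * tP n + C (ut n) * tP (n - 1)) ∧
      X * tP 0 = tP 1 + C (b 0 + B 1) * tP 0 := by
  have key : ∀ n : ℕ, 1 ≤ n → u n = B n * (c - b n - B (n + 1)) := by
    intro n hn
    have h := hΦ n hn
    have h1 := hΦne (n - 1)
    have h2 := hΦne n
    rw [hB n hn, hB (n + 1) (by omega), Nat.add_sub_cancel]
    field_simp
    linear_combination h
  have Bne : ∀ n : ℕ, 1 ≤ n → B n ≠ 0 := by
    intro n hn
    rw [hB n hn]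
    exact div_ne_zero (hΦne n) (hΦne (n - 1))
  constructor
  · intro n hn
    match n, hn with
    | 1, _ =>
      have e2 := hPrec 1 le_rfl
      have k1 := key 1 le_rfl
      simp only [show (1:ℕ) - 1 = 0 from rfl] at e2 ⊢
      rw [htP 1 le_rfl, htP 2 (by norm_num), hbt 1 le_rfl, hut1, e2, k1,
        hP0, hP1, htP0]
      simp only [show (2:ℕ) - 1 = 1 from rfl, show (1:ℕ) - 1 = 0 from rfl,
        hP0, hP1, map_mul, map_sub, map_add]
      ring
    | (m + 2), _ =>
      have en := hPrec (m + 2) (by omega)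
      have en1 := hPrec (m + 1) (by omega)
      have kn := key (m + 2) (by omega)
      have kn1 := key (m + 1) (by omega)
      have hutn : ut (m + 2) = B (m + 2) * (c - b (m + 1) - B (m + 2)) := by
        rw [hut (m + 2) (by omega)]
        simp only [show (m + 2) - 1 = m + 1 from rfl, kn1]
        field_simp [Bne (m + 1) (by omega)]
      simp only [show (m + 2) - 1 = m + 1 from rfl,
        show (m + 1) - 1 = m from rfl] at en en1 ⊢
      rw [htP (m + 2) (by omega), htP (m + 3) (by omega), htP (m + 1) (by omega),
        hbt (m + 2) (by omega), hutn]
      simp only [show (m + 3) - 1 = m + 2 from rfl,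
        show (m + 2) - 1 = m + 1 from rfl, show (m + 1) - 1 = m from rfl]
      rw [show (m + 3) = (m + 2) + 1 from rfl, en, kn, en1, kn1]
      simp only [map_mul, map_sub, map_add]
      ring
  · rw [htP 1 le_rfl, htP0, hP1]
    simp only [show (1:ℕ) - 1 = 0 from rfl, hP0, map_add]
    ring
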